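/- arXiv:2402.16121 — 2 statements merged into one kernel-verified Lean document; each statement's English description precedes it below -/
import Mathlib

section
/- Let X₁, X₂, W be real-valued random variables on a probability space such that X₁ has the Gaussian distribution N(μ_x, σ_x²), X₂ has the Gaussian distribution N(μ_x, t²σ_x²), and W has the Gaussian distribution N(μ_w, σ_w²), where σ_x > 0, σ_w > 0, μ_x ≠ 0, and t > 1. Assume X₁ is independent of W and X₂ is independent of W. Then Var(X₁·W) < Var(X₂·W) < t²·Var(X₁·W); in particular the ratio of the standard deviation of X₂·W to that of X₁·W is strictly between 1 and t, i.e. strictly smaller than the ratio t of the input standard deviations. -/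
open MeasureTheory ProbabilityTheory
open scoped NNReal ENNReal
open Real


lemma integrable_sq_mul_exp {b : ℝ} (hb : 0 < b) :
    Integrable (fun u : ℝ => u ^ 2 * Real.exp (-b * u ^ 2)) := by
  have h := integrable_rpow_mul_exp_neg_mul_sq hb (s := 2) (by norm_num)
  simpa [Real.rpow_two] using h

lemma int_mul_exp_zero {b : ℝ} (hb : 0 < b) :
    ∫ u : ℝ, u * Real.exp (-b * u ^ 2) = 0 := by
  have hderiv : ∀ u : ℝ, HasDerivAt (fun u : ℝ => -(2 * b)⁻¹ * Real.exp (-b * u ^ 2))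
      (u * Real.exp (-b * u ^ 2)) u := by
    intro u
    have := (((hasDerivAt_pow 2 u).const_mul (-b)).exp).const_mul (-(2 * b)⁻¹)
    refine this.congr_deriv ?_
    field_simp
    ring
  exact integral_eq_zero_of_hasDerivAt_of_integrable hderiv
    (integrable_mul_exp_neg_mul_sq hb) ((integrable_exp_neg_mul_sq hb).const_mul _)

lemma int_sq_mul_exp {b : ℝ} (hb : 0 < b) :
    ∫ u : ℝ, u ^ 2 * Real.exp (-b * u ^ 2)
      = (2 * b)⁻¹ * ∫ u : ℝ, Real.exp (-b * u ^ 2) := by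
  have hderiv : ∀ u : ℝ, HasDerivAt (fun u : ℝ => -(2 * b)⁻¹ * (u * Real.exp (-b * u ^ 2)))
      (u ^ 2 * Real.exp (-b * u ^ 2) - (2 * b)⁻¹ * Real.exp (-b * u ^ 2)) u := by
    intro u
    have h1 : HasDerivAt (fun u : ℝ => Real.exp (-b * u ^ 2))
        (Real.exp (-b * u ^ 2) * (-b * (2 * u))) u := by
      simpa using (((hasDerivAt_pow 2 u).const_mul (-b)).exp)
    have h2 := ((hasDerivAt_id u).mul h1).const_mul (-(2 * b)⁻¹)
    refine h2.congr_deriv ?_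
    simp only [id_eq]
    field_simp
    ring
  have h0 := integral_eq_zero_of_hasDerivAt_of_integrable hderiv
    ((integrable_sq_mul_exp hb).sub ((integrable_exp_neg_mul_sq hb).const_mul _))
    ((integrable_mul_exp_neg_mul_sq hb).const_mul _)
  rw [integral_sub (integrable_sq_mul_exp hb) ((integrable_exp_neg_mul_sq hb).const_mul _),
    integral_const_mul] at h0
  linarith

section GaussMoments
variable {m : ℝ} {v : ℝ≥0}

lemma pdf_shift (m : ℝ) (v : ℝ≥0) (u : ℝ) :
    gaussianPDFReal m v (u + m)
      = (Real.sqrt (2 * π * v))⁻¹ * Real.exp (-(2 * (v : ℝ))⁻¹ * u ^ 2) := by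
  rw [gaussianPDFReal]
  congr 1
  rw [show u + m - m = u by ring]
  congr 1
  by_cases hv : (v : ℝ) = 0
  · simp [hv]
  · field_simp

lemma integral_pdf_shift_one (m : ℝ) {v : ℝ≥0} (hv : v ≠ 0) :
    ((Real.sqrt (2 * π * v))⁻¹ * ∫ u : ℝ, Real.exp (-(2 * (v : ℝ))⁻¹ * u ^ 2)) = 1 := by
  rw [← integral_const_mul]
  rw [show (fun u : ℝ => (Real.sqrt (2 * π * v))⁻¹ * Real.exp (-(2 * (v : ℝ))⁻¹ * u ^ 2))
      = fun u => gaussianPDFReal m v (u + m) by funext u; rw [pdf_shift]]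
  rw [integral_add_right_eq_self (gaussianPDFReal m v) m]
  exact integral_gaussianPDFReal_eq_one m hv

lemma integral_gaussianReal_eq (m : ℝ) {v : ℝ≥0} (hv : v ≠ 0) (g : ℝ → ℝ) :
    ∫ x, g x ∂(gaussianReal m v) = ∫ x, gaussianPDFReal m v x * g x := by
  rw [gaussianReal_of_var_ne_zero m hv]
  have h1 : gaussianPDF m v = fun x => ((gaussianPDFReal m v x).toNNReal : ℝ≥0∞) := rfl
  rw [h1, integral_withDensity_eq_integral_smul
    ((measurable_gaussianPDFReal m v).real_toNNReal) g]
  congr 1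
  funext x
  simp [NNReal.smul_def, Real.coe_toNNReal _ (gaussianPDFReal_nonneg m v x)]

lemma integrable_gaussianReal_iff (m : ℝ) {v : ℝ≥0} (hv : v ≠ 0) (g : ℝ → ℝ) :
    Integrable g (gaussianReal m v)
      ↔ Integrable (fun x => gaussianPDFReal m v x * g x) volume := by
  rw [gaussianReal_of_var_ne_zero m hv]
  have h1 : gaussianPDF m v = fun x => ((gaussianPDFReal m v x).toNNReal : ℝ≥0∞) := rfl
  rw [h1, integrable_withDensity_iff_integrable_smul
    ((measurable_gaussianPDFReal m v).real_toNNReal)]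
  constructor <;> intro h <;> refine h.congr (Filter.Eventually.of_forall fun x => ?_) <;>
    simp [NNReal.smul_def, Real.coe_toNNReal _ (gaussianPDFReal_nonneg m v x)]

lemma integral_id_gaussianReal (m : ℝ) {v : ℝ≥0} (hv : v ≠ 0) :
    ∫ x, x ∂(gaussianReal m v) = m := by
  have hv' : 0 < (v : ℝ) := NNReal.coe_pos.mpr (zero_lt_iff.mpr hv)
  have hb : 0 < (2 * (v : ℝ))⁻¹ := by positivity
  set c : ℝ := (Real.sqrt (2 * π * v))⁻¹ with hc
  set b : ℝ := (2 * (v : ℝ))⁻¹ with hbdef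
  rw [integral_gaussianReal_eq m hv]
  rw [← integral_add_right_eq_self (fun x => gaussianPDFReal m v x * x) m]
  have : (fun u : ℝ => gaussianPDFReal m v (u + m) * (u + m))
      = fun u => c * (u * Real.exp (-b * u ^ 2)) + m * (c * Real.exp (-b * u ^ 2)) := by
    funext u; rw [pdf_shift]; ring
  rw [this, integral_add ((integrable_mul_exp_neg_mul_sq hb).const_mul c)
    (((integrable_exp_neg_mul_sq hb).const_mul c).const_mul m),
    integral_const_mul, integral_const_mul, int_mul_exp_zero hb, integral_const_mul,
    integral_pdf_shift_one m hv]
  ring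

lemma integrable_id_gaussianReal (m : ℝ) {v : ℝ≥0} (hv : v ≠ 0) :
    Integrable (fun x : ℝ => x) (gaussianReal m v) := by
  have hv' : 0 < (v : ℝ) := NNReal.coe_pos.mpr (zero_lt_iff.mpr hv)
  have hb : 0 < (2 * (v : ℝ))⁻¹ := by positivity
  set c : ℝ := (Real.sqrt (2 * π * v))⁻¹ with hc
  set b : ℝ := (2 * (v : ℝ))⁻¹ with hbdef
  rw [integrable_gaussianReal_iff m hv]
  have h2 : Integrable (fun u : ℝ => gaussianPDFReal m v (u + m) * (u + m)) volume := by
    have : (fun u : ℝ => gaussianPDFReal m v (u + m) * (u + m))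
        = fun u => c * (u * Real.exp (-b * u ^ 2)) + m * (c * Real.exp (-b * u ^ 2)) := by
      funext u; rw [pdf_shift]; ring
    rw [this]
    exact ((integrable_mul_exp_neg_mul_sq hb).const_mul c).add
      (((integrable_exp_neg_mul_sq hb).const_mul c).const_mul m)
  simpa using h2.comp_add_right (-m)

lemma integral_sq_gaussianReal (m : ℝ) {v : ℝ≥0} (hv : v ≠ 0) :
    ∫ x, x ^ 2 ∂(gaussianReal m v) = (v : ℝ) + m ^ 2 := by
  have hv' : 0 < (v : ℝ) := NNReal.coe_pos.mpr (zero_lt_iff.mpr hv)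
  have hb : 0 < (2 * (v : ℝ))⁻¹ := by positivity
  set c : ℝ := (Real.sqrt (2 * π * v))⁻¹ with hc
  set b : ℝ := (2 * (v : ℝ))⁻¹ with hbdef
  rw [integral_gaussianReal_eq m hv]
  rw [← integral_add_right_eq_self (fun x => gaussianPDFReal m v x * x ^ 2) m]
  have : (fun u : ℝ => gaussianPDFReal m v (u + m) * (u + m) ^ 2)
      = fun u => c * (u ^ 2 * Real.exp (-b * u ^ 2))
          + ((2 * m) * (c * (u * Real.exp (-b * u ^ 2)))
            + m ^ 2 * (c * Real.exp (-b * u ^ 2))) := by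
    funext u; rw [pdf_shift]; ring
  have hA : Integrable (fun u : ℝ => c * (u ^ 2 * Real.exp (-b * u ^ 2))) volume :=
    (integrable_sq_mul_exp hb).const_mul c
  have hB : Integrable (fun u : ℝ => (2 * m) * (c * (u * Real.exp (-b * u ^ 2)))) volume :=
    ((integrable_mul_exp_neg_mul_sq hb).const_mul c).const_mul _
  have hC : Integrable (fun u : ℝ => m ^ 2 * (c * Real.exp (-b * u ^ 2))) volume :=
    ((integrable_exp_neg_mul_sq hb).const_mul c).const_mul _
  have hBC : Integrable (fun u : ℝ => (2 * m) * (c * (u * Real.exp (-b * u ^ 2)))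
      + m ^ 2 * (c * Real.exp (-b * u ^ 2))) volume := hB.add hC
  rw [this, integral_add hA hBC, integral_add hB hC]
  simp only [integral_const_mul]
  rw [int_mul_exp_zero hb, int_sq_mul_exp hb]
  have h1 : c * ∫ u : ℝ, Real.exp (-b * u ^ 2) = 1 := integral_pdf_shift_one m hv
  have h2 : (2 * b)⁻¹ = (v : ℝ) := by
    rw [hbdef]; field_simp
  calc c * ((2 * b)⁻¹ * ∫ u : ℝ, Real.exp (-b * u ^ 2))
        + (2 * m * (c * 0) + m ^ 2 * (c * ∫ u : ℝ, Real.exp (-b * u ^ 2)))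
      = (2 * b)⁻¹ * (c * ∫ u : ℝ, Real.exp (-b * u ^ 2))
        + m ^ 2 * (c * ∫ u : ℝ, Real.exp (-b * u ^ 2)) := by ring
    _ = (v : ℝ) + m ^ 2 := by rw [h1, h2]; ring

lemma integrable_sq_gaussianReal (m : ℝ) {v : ℝ≥0} (hv : v ≠ 0) :
    Integrable (fun x : ℝ => x ^ 2) (gaussianReal m v) := by
  have hv' : 0 < (v : ℝ) := NNReal.coe_pos.mpr (zero_lt_iff.mpr hv)
  have hb : 0 < (2 * (v : ℝ))⁻¹ := by positivity
  set c : ℝ := (Real.sqrt (2 * π * v))⁻¹ with hc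
  set b : ℝ := (2 * (v : ℝ))⁻¹ with hbdef
  rw [integrable_gaussianReal_iff m hv]
  have h2 : Integrable (fun u : ℝ => gaussianPDFReal m v (u + m) * (u + m) ^ 2) volume := by
    have : (fun u : ℝ => gaussianPDFReal m v (u + m) * (u + m) ^ 2)
        = fun u => c * (u ^ 2 * Real.exp (-b * u ^ 2))
            + ((2 * m) * (c * (u * Real.exp (-b * u ^ 2)))
              + m ^ 2 * (c * Real.exp (-b * u ^ 2))) := by
      funext u; rw [pdf_shift]; ring
    rw [this]
    exact ((integrable_sq_mul_exp hb).const_mul c).add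
      ((((integrable_mul_exp_neg_mul_sq hb).const_mul c).const_mul _).add
        (((integrable_exp_neg_mul_sq hb).const_mul c).const_mul _))
  simpa using h2.comp_add_right (-m)

end GaussMoments

section Main

variable {Ω : Type*} [MeasurableSpace Ω]

lemma var_prod (μ : Measure Ω) [IsProbabilityMeasure μ]
    {X W : Ω → ℝ} (hX : Measurable X) (hW : Measurable W)
    {mx : ℝ} {vx : ℝ≥0} (hvx : vx ≠ 0) (hmapX : Measure.map X μ = gaussianReal mx vx)
    {mw : ℝ} {vw : ℝ≥0} (hvw : vw ≠ 0) (hmapW : Measure.map W μ = gaussianReal mw vw)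
    (hindep : IndepFun X W μ) :
    variance (X * W) μ = ((vx : ℝ) + mx ^ 2) * ((vw : ℝ) + mw ^ 2) - (mx * mw) ^ 2 := by
  have hiX : Integrable X μ := by
    have h := integrable_id_gaussianReal mx hvx
    rw [← hmapX] at h
    exact (integrable_map_measure aestronglyMeasurable_id hX.aemeasurable).mp h
  have hiW : Integrable W μ := by
    have h := integrable_id_gaussianReal mw hvw
    rw [← hmapW] at h
    exact (integrable_map_measure aestronglyMeasurable_id hW.aemeasurable).mp h
  have hiX2 : Integrable (fun ω => X ω ^ 2) μ := by
    have h := integrable_sq_gaussianReal mx hvx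
    rw [← hmapX] at h
    exact (integrable_map_measure (measurable_id.pow_const 2).aestronglyMeasurable
      hX.aemeasurable).mp h
  have hiW2 : Integrable (fun ω => W ω ^ 2) μ := by
    have h := integrable_sq_gaussianReal mw hvw
    rw [← hmapW] at h
    exact (integrable_map_measure (measurable_id.pow_const 2).aestronglyMeasurable
      hW.aemeasurable).mp h
  have hEX : ∫ ω, X ω ∂μ = mx := by
    have h := integral_map hX.aemeasurable (aestronglyMeasurable_id (μ := Measure.map X μ))
    rw [hmapX] at h
    simpa using h.symm.trans (integral_id_gaussianReal mx hvx)
  have hEW : ∫ ω, W ω ∂μ = mw := by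
    have h := integral_map hW.aemeasurable (aestronglyMeasurable_id (μ := Measure.map W μ))
    rw [hmapW] at h
    simpa using h.symm.trans (integral_id_gaussianReal mw hvw)
  have hEX2 : ∫ ω, X ω ^ 2 ∂μ = (vx : ℝ) + mx ^ 2 := by
    have h := integral_map (f := fun x : ℝ => x ^ 2) hX.aemeasurable
      ((measurable_id.pow_const 2).aestronglyMeasurable (μ := Measure.map X μ))
    rw [hmapX] at h
    simpa using h.symm.trans (integral_sq_gaussianReal mx hvx)
  have hEW2 : ∫ ω, W ω ^ 2 ∂μ = (vw : ℝ) + mw ^ 2 := by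
    have h := integral_map (f := fun x : ℝ => x ^ 2) hW.aemeasurable
      ((measurable_id.pow_const 2).aestronglyMeasurable (μ := Measure.map W μ))
    rw [hmapW] at h
    simpa using h.symm.trans (integral_sq_gaussianReal mw hvw)
  have hsq_indep : IndepFun (fun ω => X ω ^ 2) (fun ω => W ω ^ 2) μ :=
    hindep.comp (measurable_id.pow_const 2) (measurable_id.pow_const 2)
  have hiXW : Integrable (X * W) μ := hindep.integrable_mul hiX hiW
  have hiXW2 : Integrable (fun ω => (X ω * W ω) ^ 2) μ := by
    refine (hsq_indep.integrable_mul hiX2 hiW2).congr (Filter.Eventually.of_forall fun ω => ?_)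
    simp [mul_pow]
  have hmem : MemLp (X * W) 2 μ := by
    refine (memLp_two_iff_integrable_sq hiXW.aestronglyMeasurable).mpr ?_
    exact hiXW2
  have hE2 : ∫ ω, (X ω * W ω) ^ 2 ∂μ = ((vx : ℝ) + mx ^ 2) * ((vw : ℝ) + mw ^ 2) := by
    have h := hsq_indep.integral_mul_eq_mul_integral hiX2.aestronglyMeasurable hiW2.aestronglyMeasurable
    have h' : ∫ ω, (X ω * W ω) ^ 2 ∂μ = ∫ ω, X ω ^ 2 * W ω ^ 2 ∂μ := by
      congr 1; funext ω; ring
    rw [h', ← hEX2, ← hEW2]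
    simpa [Pi.mul_apply] using h
  have hE1 : ∫ ω, X ω * W ω ∂μ = mx * mw := by
    have h := hindep.integral_mul_eq_mul_integral hiX.aestronglyMeasurable hiW.aestronglyMeasurable
    rw [← hEX, ← hEW]
    simpa [Pi.mul_apply] using h
  rw [variance_eq_sub hmem]
  have h1 : (∫ ω, (X * W) ω ^ 2 ∂μ) = ((vx : ℝ) + mx ^ 2) * ((vw : ℝ) + mw ^ 2) := by
    simpa [Pi.mul_apply] using hE2
  have h2 : (∫ ω, (X * W) ω ∂μ) = mx * mw := by
    simpa [Pi.mul_apply] using hE1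
  simp only [Pi.pow_apply] at *
  rw [h1, h2]

end Main

/-- Proposition 1: multiplying by an independent Gaussian weight `W ~ N(μ_w, σ_w²)`
strictly contracts the variance ratio between an outlier Gaussian input
`X₂ ~ N(μ_x, t²σ_x²)` and a normal Gaussian input `X₁ ~ N(μ_x, σ_x²)` (with
`σ_x, σ_w > 0`, `μ_x ≠ 0`, `t > 1`): `Var(X₁W) < Var(X₂W) < t²·Var(X₁W)`; in particular
the output standard-deviation ratio lies strictly between `1` and `t`. -/
theorem stmt0 {Ω : Type*} [MeasurableSpace Ω] (μ : Measure Ω) [IsProbabilityMeasure μ]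
    (X₁ X₂ W : Ω → ℝ) (μx σx μw σw t : ℝ)
    (hσx : 0 < σx) (hσw : 0 < σw) (hμx : μx ≠ 0) (ht : 1 < t)
    (hX₁meas : Measurable X₁) (hX₂meas : Measurable X₂) (hWmeas : Measurable W)
    (hX₁ : Measure.map X₁ μ = gaussianReal μx ⟨σx ^ 2, sq_nonneg σx⟩)
    (hX₂ : Measure.map X₂ μ = gaussianReal μx ⟨t ^ 2 * σx ^ 2,
      mul_nonneg (sq_nonneg t) (sq_nonneg σx)⟩)
    (hW : Measure.map W μ = gaussianReal μw ⟨σw ^ 2, sq_nonneg σw⟩)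
    (hindep₁ : IndepFun X₁ W μ) (hindep₂ : IndepFun X₂ W μ) :
    variance (X₁ * W) μ < variance (X₂ * W) μ ∧
    variance (X₂ * W) μ < t ^ 2 * variance (X₁ * W) μ ∧
    1 < Real.sqrt (variance (X₂ * W) μ) / Real.sqrt (variance (X₁ * W) μ) ∧
    Real.sqrt (variance (X₂ * W) μ) / Real.sqrt (variance (X₁ * W) μ) < t := by
  have ht0 : 0 < t := lt_trans one_pos ht
  have hμx2 : 0 < μx ^ 2 := by positivity
  have hv1 : (⟨σx ^ 2, sq_nonneg σx⟩ : ℝ≥0) ≠ 0 := by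
    rw [ne_eq, Subtype.ext_iff]
    positivity
  have hv2 : (⟨t ^ 2 * σx ^ 2, mul_nonneg (sq_nonneg t) (sq_nonneg σx)⟩ : ℝ≥0) ≠ 0 := by
    rw [ne_eq, Subtype.ext_iff]
    positivity
  have hvw : (⟨σw ^ 2, sq_nonneg σw⟩ : ℝ≥0) ≠ 0 := by
    rw [ne_eq, Subtype.ext_iff]
    positivity
  have hV1 := var_prod μ hX₁meas hWmeas hv1 hX₁ hvw hW hindep₁
  have hV2 := var_prod μ hX₂meas hWmeas hv2 hX₂ hvw hW hindep₂
  change variance (X₁ * W) μ = (σx ^ 2 + μx ^ 2) * (σw ^ 2 + μw ^ 2) - (μx * μw) ^ 2 at hV1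
  change variance (X₂ * W) μ = (t ^ 2 * σx ^ 2 + μx ^ 2) * (σw ^ 2 + μw ^ 2) - (μx * μw) ^ 2 at hV2
  have ht2 : 1 < t ^ 2 := by nlinarith
  have h1 : variance (X₁ * W) μ < variance (X₂ * W) μ := by
    rw [hV1, hV2]
    nlinarith [mul_pos (mul_pos (sub_pos.mpr ht2) (pow_pos hσx 2))
      (by positivity : (0:ℝ) < σw ^ 2 + μw ^ 2)]
  have h2 : variance (X₂ * W) μ < t ^ 2 * variance (X₁ * W) μ := by
    rw [hV1, hV2]
    nlinarith [mul_pos (mul_pos (sub_pos.mpr ht2) hμx2) (pow_pos hσw 2)]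
  have hV1pos : 0 < variance (X₁ * W) μ := by
    rw [hV1]
    nlinarith [mul_pos (pow_pos hσx 2) (pow_pos hσw 2),
      mul_nonneg (sq_nonneg σx) (sq_nonneg μw), mul_pos hμx2 (pow_pos hσw 2)]
  have hs1 : 0 < Real.sqrt (variance (X₁ * W) μ) := Real.sqrt_pos.mpr hV1pos
  refine ⟨h1, h2, ?_, ?_⟩
  · rw [lt_div_iff₀ hs1, one_mul]
    exact Real.sqrt_lt_sqrt hV1pos.le h1
  · rw [div_lt_iff₀ hs1]
    have h3 : Real.sqrt (variance (X₂ * W) μ) < Real.sqrt (t ^ 2 * variance (X₁ * W) μ) :=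
      Real.sqrt_lt_sqrt (variance_nonneg _ _) h2
    rwa [Real.sqrt_mul (sq_nonneg t), Real.sqrt_sq ht0.le] at h3
end

section
/- Fix a bit-width b ≥ 1, a real exponent p ≥ 1, and σ > 0. Define the unsigned uniform quantizer Q_s and the one-sided Lᵖ quantization distortion D(σ, s) = ∫_{[0,∞)} |x − Q_s(x)|^p · f_σ(x) dx against the centered Gaussian density f_σ of N(0, σ²). Suppose h > 0 minimizes s ↦ D(σ, s) over all s > 0. Then for every t > 0, the value t·h minimizes s ↦ D(t·σ, s) over all s > 0. In particular, if h is the optimal quantization step for the Gaussian N(0, σ²), then k·h is the optimal quantization step for the Gaussian N(0, k²σ²) for any k > 0. -/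
/-- The unsigned uniform `b`-bit quantizer with step size `s`:
`Q_s(x) = s · clamp(round(x/s), 0, 2^b − 1)`. -/
noncomputable def uquant (b : ℕ) (s x : ℝ) : ℝ :=
  s * ((min (max (round (x / s)) 0) (2 ^ b - 1) : ℤ) : ℝ)

/-- Density of the centered Gaussian `N(0, σ²)`. -/
noncomputable def gaussDensity (σ x : ℝ) : ℝ :=
  (1 / (σ * Real.sqrt (2 * Real.pi))) * Real.exp (-x ^ 2 / (2 * σ ^ 2))

/-- One-sided `Lᵖ` quantization distortion of the `b`-bit quantizer with step `s`
against the centered Gaussian density of `N(0, σ²)`. -/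
noncomputable def distortion (b : ℕ) (p σ s : ℝ) : ℝ :=
  ∫ x in Set.Ici (0 : ℝ), |x - uquant b s x| ^ p * gaussDensity σ x

lemma uquant_scale (b : ℕ) (t s x : ℝ) (ht : t ≠ 0) :
    uquant b (t * s) (t * x) = t * uquant b s x := by
  unfold uquant
  rw [mul_div_mul_left _ _ ht]; ring

lemma gauss_scale (σ t x : ℝ) (hσ : σ ≠ 0) (ht : 0 < t) :
    gaussDensity (t * σ) (t * x) = t⁻¹ * gaussDensity σ x := by
  unfold gaussDensity
  have ht' := ht.ne'
  rw [show (-(t * x) ^ 2 / (2 * (t * σ) ^ 2)) = (-x ^ 2 / (2 * σ ^ 2)) by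
    field_simp]
  field_simp

lemma distortion_scale (b : ℕ) (p σ s t : ℝ) (hσ : σ ≠ 0) (ht : 0 < t) :
    distortion b p (t * σ) (t * s) = t ^ p * distortion b p σ s := by
  unfold distortion
  rw [MeasureTheory.integral_Ici_eq_integral_Ioi, MeasureTheory.integral_Ici_eq_integral_Ioi]
  have key := MeasureTheory.integral_comp_mul_left_Ioi
    (fun x => |x - uquant b (t * s) x| ^ p * gaussDensity (t * σ) x) 0 ht
  rw [mul_zero] at key
  have hpt : (fun x => |t * x - uquant b (t * s) (t * x)| ^ p * gaussDensity (t * σ) (t * x))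
      = fun x => (t ^ p * t⁻¹) * (|x - uquant b s x| ^ p * gaussDensity σ x) := by
    funext x
    rw [uquant_scale b t s x ht.ne', gauss_scale σ t x hσ ht,
      show t * x - t * uquant b s x = t * (x - uquant b s x) by ring,
      abs_mul, abs_of_pos ht, Real.mul_rpow ht.le (abs_nonneg _)]
    ring
  simp only [hpt] at key
  rw [MeasureTheory.integral_const_mul] at key
  rw [smul_eq_mul] at key
  have ht' := ht.ne'
  field_simp at key
  linarith

/-- If `h > 0` minimizes the distortion `s ↦ D(σ, s)` over `s > 0`, then for every
`t > 0`, the step `t·h` minimizes `s ↦ D(t·σ, s)` over `s > 0`: the optimal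
quantization step for a Gaussian scales linearly with its standard deviation. -/
theorem stmt7 (b : ℕ) (hb : 1 ≤ b) (p σ : ℝ) (hp : 1 ≤ p) (hσ : 0 < σ)
    (h : ℝ) (hh : 0 < h) (hopt : ∀ s : ℝ, 0 < s → distortion b p σ h ≤ distortion b p σ s) :
    ∀ t : ℝ, 0 < t → ∀ s : ℝ, 0 < s →
      distortion b p (t * σ) (t * h) ≤ distortion b p (t * σ) s := by
  intro t ht s hs
  have hs' : s = t * (s / t) := by field_simp
  rw [hs', distortion_scale b p σ h t hσ.ne' ht,
    distortion_scale b p σ (s / t) t hσ.ne' ht]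
  exact mul_le_mul_of_nonneg_left (hopt _ (div_pos hs ht)) (Real.rpow_nonneg ht.le p)
end
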